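/- Let σ ⊆ ℚ^d be a pointed full-dimensional cone with d+1 extremal rays generated by v₁,…,v_{d+1}, with Gale dual w₁,…,w_{d+1}. Let D₋ = {i : w_i < 0}, D₀ = {i : w_i = 0}, D₊ = {i : w_i > 0}. For I ⊆ {1,…,d+1} set σ_I = cone(v_i; i ∈ I). Then the relative interior of σ_I is contained in the interior of σ if and only if D₋ ∪ D₀ ⊆ I or D₊ ∪ D₀ ⊆ I. -/

import Mathlib

/-- The cone generated by the vectors `v i` with `i ∈ I`. -/
def coneOn {n d : ℕ} (v : Fin n → (Fin d → ℚ)) (I : Set (Fin n)) :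
    Set (Fin d → ℚ) :=
  {x | ∃ c : Fin n → ℚ, (∀ i, 0 ≤ c i) ∧ (∀ i, i ∉ I → c i = 0) ∧
    x = ∑ i, c i • v i}


open Finset

lemma sum_dite_ext {n d : ℕ} (v : Fin n → (Fin d → ℚ)) (J : Finset (Fin n))
    (r : {j // j ∈ J} → ℚ) :
    ∑ i, (if h : i ∈ J then r ⟨i, h⟩ else 0) • v i = ∑ j : {j // j ∈ J}, r j • v ↑j := by
  have h1 : ∑ i, (if h : i ∈ J then r ⟨i, h⟩ else 0) • v i
      = ∑ i ∈ J, (if h : i ∈ J then r ⟨i, h⟩ else 0) • v i :=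
    (Finset.sum_subset (Finset.subset_univ J)
      (fun i _ hi => by rw [dif_neg hi, zero_smul])).symm
  rw [h1, ← Finset.sum_attach J (fun i => (if h : i ∈ J then r ⟨i, h⟩ else 0) • v i),
    Finset.univ_eq_attach]
  exact Finset.sum_congr rfl (fun j _ => by rw [dif_pos j.2])

lemma exists_pos_of_mem_interior {n d : ℕ} (v : Fin n → (Fin d → ℚ)) {x : Fin d → ℚ}
    (hx : x ∈ interior (coneOn v Set.univ)) :
    ∃ c : Fin n → ℚ, (∀ i, 0 < c i) ∧ x = ∑ i, c i • v i := by
  set u : Fin d → ℚ := ∑ i, v i with hu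
  have hcont : Continuous (fun t : ℚ => x - t • u) := by continuity
  have hmem : (fun t : ℚ => x - t • u) ⁻¹' interior (coneOn v Set.univ) ∈ nhds (0 : ℚ) := by
    apply hcont.continuousAt.preimage_mem_nhds
    apply isOpen_interior.mem_nhds
    simpa using hx
  obtain ⟨l, u', ⟨hl, hu'⟩, hsub⟩ := mem_nhds_iff_exists_Ioo_subset.1 hmem
  set t := u'/2 with ht
  have ht0 : 0 < t := by positivity
  have htmem : x - t • u ∈ coneOn v Set.univ :=
    interior_subset (hsub ⟨by linarith, by linarith⟩)
  obtain ⟨c, hc0, -, hcsum⟩ := htmem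
  refine ⟨fun i => c i + t, fun i => by have := hc0 i; dsimp only; linarith, ?_⟩
  have : ∑ i, (c i + t) • v i = (∑ i, c i • v i) + t • ∑ i, v i := by
    rw [Finset.smul_sum, ← Finset.sum_add_distrib]
    exact Finset.sum_congr rfl fun i _ => by rw [add_smul]
  rw [this, ← hcsum, ← hu]
  abel

lemma mem_interior_of_pos {n d : ℕ} (v : Fin n → (Fin d → ℚ))
    (hfull : Submodule.span ℚ (Set.range v) = ⊤) (c : Fin n → ℚ) (hc : ∀ i, 0 < c i) :
    ∑ i, c i • v i ∈ interior (coneOn v Set.univ) := by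
  set φ := Fintype.linearCombination ℚ v with hφ
  have hφapp : ∀ f : Fin n → ℚ, φ f = ∑ i, f i • v i := fun f => by
    simp [hφ, Fintype.linearCombination_apply]
  have hsurj : Function.Surjective φ := by
    rw [← LinearMap.range_eq_top, Fintype.range_linearCombination, hfull]
  obtain ⟨g, hg⟩ := φ.exists_rightInverse_of_surjective (LinearMap.range_eq_top.2 hsurj)
  set x := ∑ i, c i • v i with hx
  set F : (Fin d → ℚ) → (Fin n → ℚ) := fun y => c + g (y - x) with hF
  have hFcont : Continuous F := by
    have hgc : Continuous g := g.continuous_on_pi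
    exact continuous_const.add (hgc.comp (continuous_id.sub continuous_const))
  set U : Set (Fin d → ℚ) := F ⁻¹' {c' | ∀ i, 0 < c' i} with hU
  have hUopen : IsOpen U := by
    apply hFcont.isOpen_preimage
    have : {c' : Fin n → ℚ | ∀ i, 0 < c' i} = ⋂ i, (fun c' : Fin n → ℚ => c' i) ⁻¹' Set.Ioi 0 := by
      ext c'; simp [Set.mem_iInter]
    rw [this]
    exact isOpen_iInter_of_finite fun i => (isOpen_Ioi).preimage (continuous_apply i)
  have hxU : x ∈ U := by
    simp only [hU, hF, Set.mem_preimage, sub_self, map_zero, add_zero]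
    exact hc
  have hUsub : U ⊆ coneOn v Set.univ := by
    intro y hy
    refine ⟨F y, fun i => le_of_lt (hy i), fun i hi => absurd (Set.mem_univ i) hi, ?_⟩
    have : φ (F y) = y := by
      have hgy : φ (g (y - x)) = y - x := by
        have := congrArg (fun h => h (y - x)) hg
        simpa using this
      simp only [hF, map_add, hgy]
      have : φ c = x := by rw [hφapp, hx]
      rw [this]; abel
    rw [← hφapp, this]
  exact interior_maximal hUsub hUopen hxU

lemma relint_pos {n d : ℕ} (v : Fin n → (Fin d → ℚ)) (I : Set (Fin n)) {x : Fin d → ℚ}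
    (hx : x ∈ intrinsicInterior ℚ (coneOn v I)) :
    ∃ c : Fin n → ℚ, (∀ i ∈ I, 0 < c i) ∧ (∀ i ∉ I, c i = 0) ∧ x = ∑ i, c i • v i := by
  classical
  set u : Fin d → ℚ := ∑ i, (if i ∈ I then (1:ℚ) else 0) • v i with hu
  have huc : u ∈ coneOn v I :=
    ⟨fun i => if i ∈ I then 1 else 0, fun i => by dsimp only; split <;> norm_num,
      fun i hi => if_neg hi, rfl⟩
  have h0c : (0 : Fin d → ℚ) ∈ coneOn v I := ⟨0, by simp, by simp, by simp⟩
  obtain ⟨y, hy, hyx⟩ := hx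
  have hxc : x ∈ coneOn v I := by
    have := interior_subset hy
    rwa [Set.mem_preimage, hyx] at this
  have hmemspan : ∀ t : ℚ, x - t • u ∈ affineSpan ℚ (coneOn v I) := by
    intro t
    have heq : x - t • u = (-t) • (u -ᵥ (0 : Fin d → ℚ)) +ᵥ x := by
      simp only [vsub_eq_sub, sub_zero, vadd_eq_add, neg_smul]
      abel
    rw [heq]
    exact AffineSubspace.smul_vsub_vadd_mem _ (-t) (subset_affineSpan ℚ _ huc)
      (subset_affineSpan ℚ _ h0c) (subset_affineSpan ℚ _ hxc)
  set f : ℚ → (affineSpan ℚ (coneOn v I)) := fun t => ⟨x - t • u, hmemspan t⟩ with hf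
  have hfc : Continuous f := by
    apply Continuous.subtype_mk
    continuity
  have hf0 : f 0 = y := Subtype.ext (by simp [hf, hyx])
  have hmem : f ⁻¹' interior (Subtype.val ⁻¹' coneOn v I) ∈ nhds (0 : ℚ) := by
    apply hfc.continuousAt.preimage_mem_nhds
    apply isOpen_interior.mem_nhds
    rw [hf0]; exact hy
  obtain ⟨l, u', ⟨hl, hu'⟩, hsub⟩ := mem_nhds_iff_exists_Ioo_subset.1 hmem
  set t := u'/2 with ht
  have ht0 : 0 < t := by positivity
  have htmem : x - t • u ∈ coneOn v I := by
    have := interior_subset (hsub (⟨by linarith, by linarith⟩ : t ∈ Set.Ioo l u'))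
    exact this
  obtain ⟨c, hc0, hcI, hcsum⟩ := htmem
  refine ⟨fun i => c i + (if i ∈ I then t else 0), ?_, ?_, ?_⟩
  · intro i hi
    have := hc0 i
    simp only [if_pos hi]
    linarith
  · intro i hi
    simp only [if_neg hi, add_zero]
    exact hcI i hi
  · have hsplit : ∑ i, (c i + (if i ∈ I then t else 0)) • v i
        = (∑ i, c i • v i) + t • ∑ i, (if i ∈ I then (1:ℚ) else 0) • v i := by
      rw [Finset.smul_sum, ← Finset.sum_add_distrib]
      refine Finset.sum_congr rfl fun i _ => ?_
      rw [add_smul, smul_smul]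
      congr 2
      split <;> simp
    rw [hsplit, ← hcsum, ← hu]
    abel

lemma mem_relint {n d : ℕ} (v : Fin n → (Fin d → ℚ)) (I : Set (Fin n)) (J : Finset (Fin n))
    (hJI : ∀ j ∈ J, j ∈ I)
    (hli : LinearIndependent ℚ (fun j : {j // j ∈ J} => v ↑j))
    (hsp : ∀ i ∈ I, v i ∈ Submodule.span ℚ (Set.range (fun j : {j // j ∈ J} => v ↑j))) :
    ∑ j ∈ J, v j ∈ intrinsicInterior ℚ (coneOn v I) := by
  classical
  set L := Submodule.span ℚ (Set.range (fun j : {j // j ∈ J} => v ↑j)) with hL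
  set bL : Module.Basis {j // j ∈ J} ℚ L := Module.Basis.span hli with hbL
  obtain ⟨K, hK⟩ := L.exists_isCompl
  set π : (Fin d → ℚ) →ₗ[ℚ] L := Submodule.projectionOnto L K hK with hπ
  set lam : {j // j ∈ J} → ((Fin d → ℚ) →ₗ[ℚ] ℚ) := fun j => (bL.coord j).comp π with hlam
  set x : Fin d → ℚ := ∑ j ∈ J, v j with hx
  -- x is in the cone
  have hxI : x ∈ coneOn v I := by
    refine ⟨fun i => if i ∈ J then 1 else 0, fun i => by dsimp only; split <;> norm_num,
      fun i hi => if_neg (fun hij => hi (hJI i hij)), ?_⟩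
    rw [hx]
    have : ∀ i : Fin n, (if i ∈ J then (1:ℚ) else 0) • v i = if i ∈ J then v i else 0 := by
      intro i; split <;> simp
    simp only [this]
    rw [Finset.sum_ite_mem, Finset.univ_inter]
  -- key representation lemma
  have hcoe : ∀ j : {j // j ∈ J}, ((bL j : Fin d → ℚ)) = v ↑j := fun j => congrArg Subtype.val (Module.Basis.span_apply hli j)
  have key : ∀ (y : Fin d → ℚ) (hy : y ∈ L),
      y = ∑ j : {j // j ∈ J}, (bL.repr ⟨y, hy⟩) j • v ↑j := by
    intro y hy
    have h1 := bL.sum_repr ⟨y, hy⟩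
    have h2 := congrArg (Subtype.val : L → (Fin d → ℚ)) h1
    rw [Submodule.coe_sum] at h2
    simp only [SetLike.val_smul, hcoe] at h2
    exact h2.symm
  have hlamval : ∀ (y : Fin d → ℚ) (hy : y ∈ L) (j : {j // j ∈ J}),
      lam j y = bL.repr ⟨y, hy⟩ j := by
    intro y hy j
    have hπy : π y = ⟨y, hy⟩ := Submodule.projectionOnto_apply_left hK ⟨y, hy⟩
    simp [hlam, hπy, Module.Basis.coord_apply]
  -- x in L and its coordinates are 1
  have hxL : x ∈ L := by
    rw [hx]
    exact Submodule.sum_mem L (fun j hj => Submodule.subset_span ⟨⟨j, hj⟩, rfl⟩)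
  have hxrep : (⟨x, hxL⟩ : L) = ∑ j : {j // j ∈ J}, bL j := by
    apply Subtype.val_injective
    rw [Submodule.coe_sum]
    simp only [hcoe]
    rw [hx, ← Finset.sum_coe_sort J v]
  have hlamx : ∀ j : {j // j ∈ J}, 0 < lam j x := by
    intro j
    rw [hlamval x hxL j, hxrep, map_sum]
    simp only [Module.Basis.repr_self]
    rw [Finsupp.finset_sum_apply]
    simp only [Finsupp.single_apply]
    rw [Finset.sum_ite_eq' Finset.univ j (fun _ => (1:ℚ))]
    simp
  -- the open set
  set U : Set (Fin d → ℚ) := ⋂ j : {j // j ∈ J}, (lam j) ⁻¹' Set.Ioi 0 with hU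
  have hUopen : IsOpen U :=
    isOpen_iInter_of_finite fun j => (isOpen_Ioi).preimage (lam j).continuous_on_pi
  have hxU : x ∈ U := Set.mem_iInter.2 fun j => hlamx j
  -- the inclusion
  have hconeL : coneOn v I ⊆ (L : Set (Fin d → ℚ)) := by
    rintro z ⟨c, hc0, hcI, rfl⟩
    refine Submodule.sum_mem L (fun i _ => ?_)
    by_cases hi : i ∈ I
    · exact Submodule.smul_mem L _ (hsp i hi)
    · rw [hcI i hi, zero_smul]; exact Submodule.zero_mem L
  have hspanL : (affineSpan ℚ (coneOn v I) : Set (Fin d → ℚ)) ⊆ (L : Set (Fin d → ℚ)) := by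
    intro z hz
    have := affineSpan_subset_span (k := ℚ) hz
    exact Submodule.span_le.2 hconeL this
  have hsubset : (Subtype.val ⁻¹' U : Set (affineSpan ℚ (coneOn v I)))
      ⊆ Subtype.val ⁻¹' coneOn v I := by
    rintro ⟨z, hz⟩ hzU
    have hzL : z ∈ L := hspanL hz
    have hzrep := key z hzL
    refine ⟨fun i => if h : i ∈ J then (bL.repr ⟨z, hzL⟩) ⟨i, h⟩ else 0, ?_, ?_, ?_⟩
    · intro i
      dsimp only
      split
      · rename_i h
        have : 0 < lam ⟨i, h⟩ z := Set.mem_iInter.1 hzU ⟨i, h⟩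
        rw [hlamval z hzL ⟨i, h⟩] at this
        exact le_of_lt this
      · exact le_refl 0
    · intro i hi
      exact dif_neg (fun hij => hi (hJI i hij))
    · rw [sum_dite_ext v J]
      exact hzrep
  -- conclude
  refine ⟨⟨x, subset_affineSpan ℚ _ hxI⟩, ?_, rfl⟩
  exact interior_maximal hsubset (hUopen.preimage continuous_subtype_val) hxU

lemma relint_subset_interior {d : ℕ} (v : Fin (d + 1) → (Fin d → ℚ)) (w : Fin (d + 1) → ℚ)
    (hfull : Submodule.span ℚ (Set.range v) = ⊤)
    (hker : ∑ i, w i • v i = 0) (I : Set (Fin (d + 1)))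
    (hI : {i | w i < 0} ∪ {i | w i = 0} ⊆ I) :
    intrinsicInterior ℚ (coneOn v I) ⊆ interior (coneOn v Set.univ) := by
  classical
  intro x hx
  obtain ⟨c, hcpos, hc0, hxc⟩ := relint_pos v I hx
  have hcnn : ∀ i, 0 ≤ c i := by
    intro i
    by_cases hi : i ∈ I
    · exact le_of_lt (hcpos i hi)
    · rw [hc0 i hi]
  set s : ℚ := Finset.univ.inf' (Finset.univ_nonempty) (fun i : Fin (d+1) =>
    if w i < 0 then c i / (2 * (-w i)) else 1) with hs
  have hspos : 0 < s := by
    rw [hs, Finset.lt_inf'_iff]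
    intro i _
    split
    · rename_i hwi
      have hiI : i ∈ I := hI (Or.inl hwi)
      have := hcpos i hiI
      apply div_pos this (by linarith)
    · norm_num
  set c' : Fin (d + 1) → ℚ := fun i => c i + s * w i with hc'
  have hc'pos : ∀ i, 0 < c' i := by
    intro i
    rw [hc']
    dsimp only
    rcases lt_trichotomy (w i) 0 with hwi | hwi | hwi
    · have hiI : i ∈ I := hI (Or.inl hwi)
      have hci := hcpos i hiI
      have hle : s ≤ c i / (2 * (-w i)) := by
        have := Finset.inf'_le (f := fun i : Fin (d+1) =>
          if w i < 0 then c i / (2 * (-w i)) else 1) (Finset.mem_univ i)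
        rwa [if_pos hwi] at this
      have h2 : s * (2 * (-w i)) ≤ c i := by
        rw [← le_div_iff₀ (by linarith : (0:ℚ) < 2 * (-w i))]
        exact hle
      nlinarith [mul_pos hspos (neg_pos.2 hwi)]
    · have hiI : i ∈ I := hI (Or.inr hwi)
      have := hcpos i hiI
      rw [hwi]; linarith
    · have := hcnn i
      nlinarith [mul_pos hspos hwi]
  have hsum : ∑ i, c' i • v i = x := by
    have : ∑ i, c' i • v i = (∑ i, c i • v i) + s • ∑ i, w i • v i := by
      rw [Finset.smul_sum, ← Finset.sum_add_distrib]
      exact Finset.sum_congr rfl fun i _ => by rw [hc', add_smul, smul_smul]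
    rw [this, hker, smul_zero, add_zero, ← hxc]
  rw [← hsum]
  exact mem_interior_of_pos v hfull c' hc'pos

/-- Gale duality, part (iii): the relative interior of `σ_I` is contained in
the interior of `σ` if and only if `D₋ ∪ D₀ ⊆ I` or `D₊ ∪ D₀ ⊆ I`. -/
theorem gale_relint_criterion (d : ℕ) (hd : 3 ≤ d)
    (v : Fin (d + 1) → (Fin d → ℚ)) (w : Fin (d + 1) → ℚ)
    (hpointed : ∀ x, x ∈ coneOn v Set.univ → -x ∈ coneOn v Set.univ → x = 0)
    (hfull : Submodule.span ℚ (Set.range v) = ⊤)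
    (hextremal : ∀ i, v i ∉ coneOn v {j | j ≠ i})
    (hw0 : w ≠ 0)
    (hker : ∑ i, w i • v i = 0)
    (hspan : ∀ c : Fin (d + 1) → ℚ, ∑ i, c i • v i = 0 → ∃ t : ℚ, c = t • w)
    (I : Set (Fin (d + 1))) :
    intrinsicInterior ℚ (coneOn v I) ⊆ interior (coneOn v Set.univ) ↔
    ({i | w i < 0} ∪ {i | w i = 0} ⊆ I ∨ {i | 0 < w i} ∪ {i | w i = 0} ⊆ I) := by
  classical
  constructor
  · intro hsub
    by_contra hnot
    push_neg at hnot
    obtain ⟨hnA, hnB⟩ := hnot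
    obtain ⟨a, haD, haI⟩ := Set.not_subset.1 hnA
    obtain ⟨b, hbD, hbI⟩ := Set.not_subset.1 hnB
    have hwa : w a ≤ 0 := by
      rcases haD with h | h
      · exact le_of_lt h
      · exact le_of_eq h
    have hwb : 0 ≤ w b := by
      rcases hbD with h | h
      · exact le_of_lt h
      · exact ge_of_eq h
    -- choose the special index i₀
    have hex : ∃ i₀, w i₀ ≠ 0 ∧ (i₀ ∉ I ∨ ∀ i, i ∉ I → w i = 0) := by
      by_cases hcase : ∃ i, w i ≠ 0 ∧ i ∉ I
      · obtain ⟨i₀, h1, h2⟩ := hcase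
        exact ⟨i₀, h1, Or.inl h2⟩
      · push_neg at hcase
        obtain ⟨i₀, h1⟩ := Function.ne_iff.1 hw0
        refine ⟨i₀, by simpa using h1, Or.inr fun i hi => ?_⟩
        by_contra h
        exact hi (hcase i h)
    obtain ⟨i₀, hwi₀, halt⟩ := hex
    set J : Finset (Fin (d + 1)) := Finset.univ.filter (fun j => j ∈ I ∧ j ≠ i₀) with hJ
    have hmemJ : ∀ j, j ∈ J ↔ (j ∈ I ∧ j ≠ i₀) := fun j => by simp [hJ]
    have hi₀J : i₀ ∉ J := fun h => ((hmemJ i₀).1 h).2 rfl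
    have hJI : ∀ j ∈ J, j ∈ I := fun j hj => ((hmemJ j).1 hj).1
    have haJ : a ∉ J := fun h => haI (hJI a h)
    have hbJ : b ∉ J := fun h => hbI (hJI b h)
    -- linear independence of the v_j, j ∈ J
    have hli : LinearIndependent ℚ (fun j : {j // j ∈ J} => v ↑j) := by
      rw [Fintype.linearIndependent_iff]
      intro g hg
      set c : Fin (d + 1) → ℚ := fun i => if h : i ∈ J then g ⟨i, h⟩ else 0 with hc
      have hcs : ∑ i, c i • v i = 0 := by rw [hc, sum_dite_ext v J g]; exact hg
      obtain ⟨t, htc⟩ := hspan c hcs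
      have ht0 : t = 0 := by
        have h1 : c i₀ = t * w i₀ := by rw [htc]; simp
        have hci₀ : c i₀ = 0 := dif_neg hi₀J
        rw [hci₀] at h1
        rcases mul_eq_zero.1 h1.symm with h | h
        · exact h
        · exact absurd h hwi₀
      intro j
      have h2 : c ↑j = g j := by rw [hc]; simp [dif_pos j.2]
      rw [← h2, htc, ht0]
      simp
    -- span condition
    have hsp : ∀ i ∈ I, v i ∈ Submodule.span ℚ (Set.range (fun j : {j // j ∈ J} => v ↑j)) := by
      intro i hiI
      by_cases hij : i ∈ J
      · exact Submodule.subset_span ⟨⟨i, hij⟩, rfl⟩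
      · have hii₀ : i = i₀ := by
          by_contra h
          exact hij ((hmemJ i).2 ⟨hiI, h⟩)
        subst hii₀
        have hsupp : ∀ k, k ∉ I → w k = 0 := by
          rcases halt with h | h
          · exact absurd hiI h
          · exact h
        have h1 : ∑ j ∈ Finset.univ.erase i, w j • v j + w i • v i = 0 := by
          rw [Finset.sum_erase_add _ _ (Finset.mem_univ i)]; exact hker
        have h2 : v i = (w i)⁻¹ • (-(∑ j ∈ Finset.univ.erase i, w j • v j)) := by
          calc v i = (w i)⁻¹ • (w i • v i) := by
                rw [smul_smul, inv_mul_cancel₀ hwi₀, one_smul]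
            _ = (w i)⁻¹ • (-(∑ j ∈ Finset.univ.erase i, w j • v j)) := by
                rw [eq_neg_of_add_eq_zero_right h1]
        rw [h2]
        refine Submodule.smul_mem _ _ (Submodule.neg_mem _ (Submodule.sum_mem _ fun j hj => ?_))
        by_cases hwj : w j = 0
        · rw [hwj, zero_smul]; exact Submodule.zero_mem _
        · have hjI : j ∈ I := by
            by_contra h
            exact hwj (hsupp j h)
          have hjne : j ≠ i := Finset.ne_of_mem_erase hj
          exact Submodule.smul_mem _ _
            (Submodule.subset_span ⟨⟨j, (hmemJ j).2 ⟨hjI, hjne⟩⟩, rfl⟩)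
    -- derive the contradiction
    have hxint := hsub (mem_relint v I J hJI hli hsp)
    obtain ⟨c', hc'pos, hc'sum⟩ := exists_pos_of_mem_interior v hxint
    have hxind : ∑ j ∈ J, v j = ∑ i, (if i ∈ J then (1 : ℚ) else 0) • v i := by
      have h3 : ∀ i : Fin (d + 1), (if i ∈ J then (1 : ℚ) else 0) • v i
          = if i ∈ J then v i else 0 := fun i => by split <;> simp
      simp only [h3]
      rw [Finset.sum_ite_mem, Finset.univ_inter]
    have hdiff : ∑ i, (c' i - (if i ∈ J then (1 : ℚ) else 0)) • v i = 0 := by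
      have h4 : ∀ i : Fin (d + 1), (c' i - (if i ∈ J then (1 : ℚ) else 0)) • v i
          = c' i • v i - (if i ∈ J then (1 : ℚ) else 0) • v i := fun i => by rw [sub_smul]
      simp only [h4]
      rw [Finset.sum_sub_distrib, ← hc'sum, ← hxind, sub_self]
    obtain ⟨t, ht⟩ := hspan _ hdiff
    have hta : c' a = t * w a := by
      have := congrFun ht a
      simp only [if_neg haJ, sub_zero, Pi.smul_apply, smul_eq_mul] at this
      exact this
    have htb : c' b = t * w b := by
      have := congrFun ht b
      simp only [if_neg hbJ, sub_zero, Pi.smul_apply, smul_eq_mul] at this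
      exact this
    have hpa : 0 < t * w a := hta ▸ hc'pos a
    have hpb : 0 < t * w b := htb ▸ hc'pos b
    nlinarith [mul_pos hpa hpb, sq_nonneg t, mul_nonneg (neg_nonneg.2 hwa) hwb]
  · intro hcond
    rcases hcond with hA | hB
    · exact relint_subset_interior v w hfull hker I hA
    · refine relint_subset_interior v (-w) hfull ?_ I ?_
      · have : ∑ i, (-w) i • v i = -∑ i, w i • v i := by
          rw [← Finset.sum_neg_distrib]
          exact Finset.sum_congr rfl fun i _ => by simp [neg_smul]
        rw [this, hker, neg_zero]
      · intro i hi
        apply hB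
        simp only [Set.mem_union, Set.mem_setOf_eq, Pi.neg_apply] at hi ⊢
        rcases hi with h | h
        · left; linarith
        · right; linarith
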